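/- arXiv:0711.3692 — 2 statements merged into one kernel-verified Lean document; each statement's English description precedes it below -/
import Mathlib

section
/- For all integers n ≥ 1 and m ≥ 1, the power sum S_n(m) = 1^n + 2^n + ... + m^n satisfies S_n(m) = m + n · (T P_{n-1})(m), where P_{n-1} ∈ ℚ[X] is the polynomial with P_{n-1}(k) = S_{n-1}(k) for all positive integers k, and T is the ℚ-linear operator on ℚ[X] determined by T(X^j) = (X^{j+1} − X)/(j+1) for all j ≥ 0. -/
open Polynomial Finset

/-- The ℚ-linear operator `T` on `ℚ[X]` determined by
`T(X^j) = (X^(j+1) - X) / (j+1)` for all `j ≥ 0`. -/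
noncomputable def powerSumOp (p : Polynomial ℚ) : Polynomial ℚ :=
  p.sum fun j a => Polynomial.C (a / (j + 1)) * (Polynomial.X ^ (j + 1) - Polynomial.X)

/-- Formal antiderivative with zero constant term. -/
noncomputable def psInteg (p : Polynomial ℚ) : Polynomial ℚ :=
  p.sum fun j a => Polynomial.C (a / (j + 1)) * Polynomial.X ^ (j + 1)

lemma psInteg_derivative (p : Polynomial ℚ) : (psInteg p).derivative = p := by
  rw [psInteg, Polynomial.sum_def, map_sum]
  conv_rhs => rw [← Polynomial.sum_C_mul_X_pow_eq p, Polynomial.sum_def]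
  refine Finset.sum_congr rfl fun j hj => ?_
  have h : ((j : ℚ) + 1) ≠ 0 := by positivity
  rw [Polynomial.derivative_C_mul, Polynomial.derivative_X_pow, Nat.add_sub_cancel,
    ← mul_assoc, ← Polynomial.C_mul]
  congr 1
  push_cast
  field_simp

lemma psInteg_eval_zero (p : Polynomial ℚ) : (psInteg p).eval 0 = 0 := by
  simp [psInteg, Polynomial.sum_def, Polynomial.eval_finset_sum]

lemma eval_powerSumOp (p : Polynomial ℚ) (x : ℚ) :
    (powerSumOp p).eval x = (psInteg p).eval x - (psInteg p).eval 1 * x := by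
  simp only [powerSumOp, psInteg, Polynomial.sum_def, Polynomial.eval_finset_sum,
    Polynomial.eval_mul, Polynomial.eval_C, Polynomial.eval_sub, Polynomial.eval_pow,
    Polynomial.eval_X, one_pow, mul_one]
  rw [Finset.sum_mul, ← Finset.sum_sub_distrib]
  refine Finset.sum_congr rfl fun j hj => ?_
  ring

theorem stmt_0 (n m : ℕ) (hn : 1 ≤ n) (hm : 1 ≤ m) (P : Polynomial ℚ)
    (hP : ∀ k : ℕ, 1 ≤ k → P.eval (k : ℚ) = ∑ i ∈ Finset.Icc 1 k, (i : ℚ) ^ (n - 1)) :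
    ∑ k ∈ Finset.Icc 1 m, (k : ℚ) ^ n = (m : ℚ) + (n : ℚ) * (powerSumOp P).eval (m : ℚ) := by
  have hn0 : (n : ℚ) ≠ 0 := by positivity
  -- shift identity for P
  have hshift : P.comp (X + 1) - P - (X + 1) ^ (n - 1) = 0 := by
    apply Polynomial.eq_zero_of_infinite_isRoot
    apply Set.infinite_of_injective_forall_mem
      (f := fun k : ℕ => ((k : ℚ) + 1))
    · intro a b hab
      simpa using hab
    · intro k
      have h1 : (1 : ℕ) ≤ k + 1 := le_add_self
      have h2 : (1 : ℕ) ≤ k + 1 + 1 := by omega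
      simp only [Set.mem_setOf_eq, Polynomial.IsRoot, Polynomial.eval_sub,
        Polynomial.eval_comp, Polynomial.eval_add, Polynomial.eval_X, Polynomial.eval_one,
        Polynomial.eval_pow]
      have e1 := hP (k + 1) h1
      have e2 := hP (k + 1 + 1) h2
      rw [Finset.sum_Icc_succ_top (by omega)] at e2
      push_cast at e1 e2 ⊢
      rw [e2, e1]
      ring
  set G := psInteg P with hG
  set c := G.eval 1 with hc
  -- the difference polynomial is constant
  have hr : G.comp (X + 1) - G - C (1 / (n : ℚ)) * (X + 1) ^ n = C (c - 1 / (n : ℚ)) := by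
    have hd : (G.comp (X + 1) - G - C (1 / (n : ℚ)) * (X + 1) ^ n).derivative = 0 := by
      rw [Polynomial.derivative_sub, Polynomial.derivative_sub,
        Polynomial.derivative_comp, hG, psInteg_derivative, Polynomial.derivative_C_mul,
        Polynomial.derivative_pow]
      simp only [Polynomial.derivative_add, Polynomial.derivative_X,
        Polynomial.derivative_one, add_zero, one_mul, mul_one]
      have hC : C (1 / (n : ℚ)) * (C ((n : ℕ) : ℚ) * (X + 1) ^ (n - 1))
          = (X + 1) ^ (n - 1) := by
        rw [← mul_assoc, ← Polynomial.C_mul, one_div, inv_mul_cancel₀ hn0]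
        simp
      rw [hC]
      linear_combination hshift
    set r := G.comp (X + 1) - G - C (1 / (n : ℚ)) * (X + 1) ^ n with hrdef
    have hconst : r = C (r.coeff 0) :=
      Polynomial.eq_C_of_natDegree_eq_zero
        (Polynomial.natDegree_eq_zero_of_derivative_eq_zero hd)
    have hcoeff : r.coeff 0 = r.eval 0 := Polynomial.coeff_zero_eq_eval_zero r
    have heval : r.eval 0 = c - 1 / (n : ℚ) := by
      rw [hrdef]
      simp only [Polynomial.eval_sub, Polynomial.eval_comp, Polynomial.eval_add,
        Polynomial.eval_X, Polynomial.eval_one, Polynomial.eval_mul, Polynomial.eval_C,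
        Polynomial.eval_pow, zero_add]
      rw [hG, psInteg_eval_zero, one_pow, hc]
      ring
    rw [hconst, hcoeff, heval]
  -- step identity for G evaluations
  have hstep : ∀ x : ℚ, G.eval (x + 1) - G.eval x = ((x + 1) ^ n) / n + (c - 1 / n) := by
    intro x
    have h := congrArg (Polynomial.eval x) hr
    simp only [Polynomial.eval_sub, Polynomial.eval_comp, Polynomial.eval_add,
      Polynomial.eval_X, Polynomial.eval_one, Polynomial.eval_mul, Polynomial.eval_C,
      Polynomial.eval_pow] at h
    field_simp at h ⊢
    linear_combination h
  -- main induction on m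
  induction m with
  | zero => omega
  | succ m ih =>
    rcases Nat.eq_or_lt_of_le hm with h1 | h1
    · -- m + 1 = 1
      have hme : m = 0 := by omega
      subst hme
      rw [eval_powerSumOp, ← hG, ← hc]
      norm_num [hc]
    · have hm' : 1 ≤ m := by omega
      have ihm := ih hm'
      rw [Finset.sum_Icc_succ_top (by omega), ihm]
      rw [eval_powerSumOp, eval_powerSumOp, ← hG, ← hc]
      have hs := hstep (m : ℚ)
      push_cast
      rw [show eval ((m : ℚ) + 1) G
          = eval (m : ℚ) G + ((m : ℚ) + 1) ^ n / n + (c - 1 / n) by linarith]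
      field_simp
      ring
end

section
/- For every integer n ≥ 1, the following identity of polynomials in ℚ[X] holds: T(B_n(X+1)) = (B_{n+1}(X+1) − B_{n+1}(0))/(n+1) − X, where B_k denotes the k-th Bernoulli polynomial and T is the ℚ-linear operator on ℚ[X] with T(X^j) = (X^{j+1} − X)/(j+1). -/
open Polynomial

lemma derivative_powerSumOp (p : Polynomial ℚ) :
    Polynomial.derivative (powerSumOp p) =
      p - Polynomial.C (p.sum fun j a => a / (j + 1)) := by
  unfold powerSumOp
  rw [Polynomial.sum, map_sum]
  have key : ∀ j ∈ p.support,
      Polynomial.derivative (Polynomial.C (p.coeff j / (j + 1)) *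
        (Polynomial.X ^ (j + 1) - Polynomial.X)) =
      Polynomial.C (p.coeff j) * Polynomial.X ^ j -
        Polynomial.C (p.coeff j / (j + 1)) := by
    intro j _
    have hj : ((j : ℚ) + 1) ≠ 0 := by positivity
    rw [Polynomial.derivative_C_mul, Polynomial.derivative_sub, Polynomial.derivative_X_pow,
      Polynomial.derivative_X, mul_sub, mul_one]
    congr 1
    simp only [Nat.add_sub_cancel]
    rw [← mul_assoc, ← Polynomial.C_mul]
    congr 1
    push_cast
    rw [div_mul_cancel₀ _ hj]
  rw [Finset.sum_congr rfl key, Finset.sum_sub_distrib]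
  congr 1
  · exact p.sum_C_mul_X_pow_eq
  · rw [Polynomial.sum, map_sum]

lemma eval_powerSumOp_zero (p : Polynomial ℚ) : (powerSumOp p).eval 0 = 0 := by
  unfold powerSumOp
  rw [Polynomial.sum, Polynomial.eval_finset_sum]
  apply Finset.sum_eq_zero
  intro j _
  simp

lemma eval_powerSumOp_one (p : Polynomial ℚ) : (powerSumOp p).eval 1 = 0 := by
  unfold powerSumOp
  rw [Polynomial.sum, Polynomial.eval_finset_sum]
  apply Finset.sum_eq_zero
  intro j _
  simp

theorem stmt_2 (n : ℕ) (hn : 1 ≤ n) :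
    powerSumOp ((Polynomial.bernoulli n).comp (Polynomial.X + 1)) =
      Polynomial.C (((n : ℚ) + 1)⁻¹) *
        ((Polynomial.bernoulli (n + 1)).comp (Polynomial.X + 1) -
          Polynomial.C ((Polynomial.bernoulli (n + 1)).eval 0)) - Polynomial.X := by
  have hn1 : ((n : ℚ) + 1) ≠ 0 := by positivity
  set p : Polynomial ℚ := (Polynomial.bernoulli n).comp (Polynomial.X + 1) with hp
  set R : Polynomial ℚ := Polynomial.C (((n : ℚ) + 1)⁻¹) *
        ((Polynomial.bernoulli (n + 1)).comp (Polynomial.X + 1) -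
          Polynomial.C ((Polynomial.bernoulli (n + 1)).eval 0)) - Polynomial.X with hR
  set c : ℚ := p.sum fun j a => a / (j + 1) with hc
  set D : Polynomial ℚ := powerSumOp p - R with hD
  -- derivative of R
  have hdR : Polynomial.derivative R = p - 1 := by
    rw [hR]
    rw [Polynomial.derivative_sub, Polynomial.derivative_X, Polynomial.derivative_C_mul,
      Polynomial.derivative_sub, Polynomial.derivative_C, sub_zero,
      Polynomial.derivative_comp, Polynomial.derivative_bernoulli_add_one]
    simp only [Polynomial.derivative_add, Polynomial.derivative_X, Polynomial.derivative_one,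
      add_zero, mul_one, Polynomial.mul_comp, Polynomial.add_comp, Polynomial.natCast_comp,
      Polynomial.one_comp, one_mul]
    rw [← mul_assoc, ← Polynomial.C_eq_natCast, ← Polynomial.C_1, ← Polynomial.C_add,
      ← Polynomial.C_mul, inv_mul_cancel₀ hn1, Polynomial.C_1, one_mul]
  have hdD : Polynomial.derivative D = Polynomial.C (1 - c) := by
    rw [hD, Polynomial.derivative_sub, derivative_powerSumOp, hdR]
    rw [map_sub, Polynomial.C_1]
    ring
  -- D is linear: D = C (1 - c) * X + C b
  have hE : Polynomial.derivative (D - Polynomial.C (1 - c) * Polynomial.X) = 0 := by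
    rw [Polynomial.derivative_sub, hdD, Polynomial.derivative_C_mul, Polynomial.derivative_X,
      mul_one, sub_self]
  have hdeg := Polynomial.natDegree_eq_zero_of_derivative_eq_zero hE
  obtain ⟨b, hb⟩ := Polynomial.natDegree_eq_zero.mp hdeg
  have hDform : D = Polynomial.C (1 - c) * Polynomial.X + Polynomial.C b := by
    have h := hb
    rw [eq_sub_iff_add_eq] at h
    rw [← h]; ring
  -- evaluations of R
  have heB1 : (Polynomial.bernoulli (n + 1)).eval 1 = (Polynomial.bernoulli (n + 1)).eval 0 := by
    rw [Polynomial.bernoulli_eval_one, Polynomial.bernoulli_eval_zero,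
      bernoulli_eq_bernoulli'_of_ne_one (by omega)]
  have hR0 : R.eval 0 = 0 := by
    rw [hR]
    simp only [Polynomial.eval_sub, Polynomial.eval_mul, Polynomial.eval_C, Polynomial.eval_X,
      Polynomial.eval_comp, Polynomial.eval_add, Polynomial.eval_one]
    rw [zero_add, heB1]
    ring
  have hR1 : R.eval 1 = 0 := by
    rw [hR]
    simp only [Polynomial.eval_sub, Polynomial.eval_mul, Polynomial.eval_C, Polynomial.eval_X,
      Polynomial.eval_comp, Polynomial.eval_add, Polynomial.eval_one]
    have h2 : (1 : ℚ) + 1 = 1 + (1 : ℚ) := by ring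
    rw [h2, Polynomial.bernoulli_eval_one_add, heB1]
    push_cast
    rw [one_pow, mul_one]
    field_simp
    ring
  -- evaluations of D
  have hD0 : D.eval 0 = 0 := by rw [hD]; simp [eval_powerSumOp_zero, hR0]
  have hD1 : D.eval 1 = 0 := by rw [hD]; simp [eval_powerSumOp_one, hR1]
  rw [hDform] at hD0 hD1
  simp only [Polynomial.eval_add, Polynomial.eval_mul, Polynomial.eval_C, Polynomial.eval_X,
    mul_zero, zero_add, mul_one] at hD0 hD1
  have h1c : (1 : ℚ) - c = 0 := by linarith
  have hbz : b = 0 := hD0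
  have : D = 0 := by rw [hDform, h1c, hbz]; simp
  have := sub_eq_zero.mp (hD ▸ this)
  exact this
end
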